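/- There is a constant c depending only on n and ψ such that for every α ≥ 1, every cube Q, every k ≥ 1, and every locally integrable f, (ℓ_Q/α) ∫_{2^{k−2}ℓ_Q/α}^{2^{k+1}ℓ_Q} ∫_{2^{k+1}Q} |(f χ_{2^{k+2}Q}) * ψ_t(y)|² dy dt / t^{n+2} ≤ c α^{2n} 2^{−k} ( |2^{k+2}Q|^{−1} ∫_{2^{k+2}Q} |f| )². -/

import Mathlib

open MeasureTheory ENNReal Set

noncomputable section

/-- An axis-parallel half-open cube in `ℝⁿ`, given by its lower corner and sidelength. -/
structure RCube (n : ℕ) where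
  corner : Fin n → ℝ
  side : ℝ

namespace RCube

/-- The set of points of a cube (half-open, so that dyadic cubes partition space). -/
def toSet {n : ℕ} (Q : RCube n) : Set (Fin n → ℝ) :=
  {x | ∀ i, Q.corner i ≤ x i ∧ x i < Q.corner i + Q.side}

/-- The concentric dilate `lQ` of a cube `Q`. -/
def dilate {n : ℕ} (Q : RCube n) (l : ℝ) : RCube n :=
  ⟨fun i => Q.corner i - (l - 1) * Q.side / 2, l * Q.side⟩

end RCube

/-- The average `f_Q = |Q|⁻¹ ∫_Q f` of a function over a cube. -/
def avg {n : ℕ} (f : (Fin n → ℝ) → ℝ) (Q : RCube n) : ℝ :=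
  (volume Q.toSet).toReal⁻¹ * ∫ y in Q.toSet, f y

/-- The `A_p` characteristic `[w]_{A_p}` of a weight `w`. -/
def ApChar {n : ℕ} (p : ℝ) (w : (Fin n → ℝ) → ℝ) : ℝ≥0∞ :=
  ⨆ (Q : RCube n) (_ : 0 < Q.side),
    ENNReal.ofReal (avg w Q * (avg (fun x => w x ^ (-(1 / (p - 1)))) Q) ^ (p - 1))

/-- The weighted norm `‖f‖_{L^p(w)}` of a real-valued function. -/
def wLp {n : ℕ} (p : ℝ) (w f : (Fin n → ℝ) → ℝ) : ℝ≥0∞ :=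
  (∫⁻ x, ENNReal.ofReal (|f x| ^ p * w x)) ^ (1 / p)

/-- The weighted norm `‖F‖_{L^p(w)}` of an `ℝ≥0∞`-valued function. -/
def wLpE {n : ℕ} (p : ℝ) (w : (Fin n → ℝ) → ℝ) (F : (Fin n → ℝ) → ℝ≥0∞) : ℝ≥0∞ :=
  (∫⁻ x, F x ^ p * ENNReal.ofReal (w x)) ^ (1 / p)

/-- The weighted weak norm `‖F‖_{L^{p,∞}(w)}`. -/
def wWeak {n : ℕ} (p : ℝ) (w : (Fin n → ℝ) → ℝ) (F : (Fin n → ℝ) → ℝ≥0∞) : ℝ≥0∞ :=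
  ⨆ (ξ : ℝ) (_ : 0 < ξ), ENNReal.ofReal ξ *
    (∫⁻ x in {x | ENNReal.ofReal ξ < F x}, ENNReal.ofReal (w x)) ^ (1 / p)

/-- The weak `L¹` quasinorm (with respect to Lebesgue measure). -/
def weakL1 {n : ℕ} (F : (Fin n → ℝ) → ℝ≥0∞) : ℝ≥0∞ :=
  ⨆ (ξ : ℝ) (_ : 0 < ξ), ENNReal.ofReal ξ * volume {x | ENNReal.ofReal ξ < F x}

/-- The `L¹` norm as a lower integral. -/
def normL1 {n : ℕ} (f : (Fin n → ℝ) → ℝ) : ℝ≥0∞ :=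
  ∫⁻ x, ENNReal.ofReal |f x|

/-- The dilation `ψ_t(x) = t^{-n} ψ(x/t)`. -/
def psit {n : ℕ} (ψ : (Fin n → ℝ) → ℝ) (t : ℝ) (x : Fin n → ℝ) : ℝ :=
  (t ^ n)⁻¹ * ψ fun i => x i / t

/-- Convolution `f * g (y) = ∫ f(ξ) g(y - ξ) dξ`. -/
def convol {n : ℕ} (f g : (Fin n → ℝ) → ℝ) (y : Fin n → ℝ) : ℝ :=
  ∫ ξ, f ξ * g (y - ξ)

/-- `ψ` is a standard kernel: integrable, mean zero, with size decay `(1+|x|)^{-(n+ε)}`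
and `L¹`-Hölder smoothness of order `ε`. -/
def StdKernel {n : ℕ} (ψ : (Fin n → ℝ) → ℝ) (ε : ℝ) : Prop :=
  Integrable ψ ∧ (∫ x, ψ x) = 0 ∧ 0 < ε ∧ ε ≤ 1 ∧
    ∃ c : ℝ, 0 < c ∧ (∀ x, |ψ x| ≤ c / (1 + ‖x‖) ^ ((n : ℝ) + ε)) ∧
      ∀ h : Fin n → ℝ, (∫ x, |ψ (x + h) - ψ x|) ≤ c * ‖h‖ ^ ε

/-- The cone `Γ_α(x)` of aperture `α` with vertex `x`. -/
def coneSet {n : ℕ} (α : ℝ) (x : Fin n → ℝ) : Set ((Fin n → ℝ) × ℝ) :=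
  {p | 0 < p.2 ∧ ‖p.1 - x‖ < α * p.2}

/-- The square function `S_{α,ψ}(f)`. -/
def Ssq {n : ℕ} (ψ : (Fin n → ℝ) → ℝ) (α : ℝ) (f : (Fin n → ℝ) → ℝ) (x : Fin n → ℝ) : ℝ≥0∞ :=
  (∫⁻ p in coneSet α x,
      ENNReal.ofReal ((convol f (psit ψ p.2) p.1) ^ 2 / p.2 ^ (n + 1))) ^ (1 / 2 : ℝ)

/-- The square function `S_α(F)` of a function `F` on the upper half-space. -/
def SsqF {n : ℕ} (α : ℝ) (F : (Fin n → ℝ) × ℝ → ℝ) (x : Fin n → ℝ) : ℝ≥0∞ :=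
  (∫⁻ p in coneSet α x, ENNReal.ofReal (F p ^ 2 / p.2 ^ (n + 1))) ^ (1 / 2 : ℝ)

/-- The Littlewood–Paley function `g*_{μ,ψ}(f)`. -/
def gstar {n : ℕ} (ψ : (Fin n → ℝ) → ℝ) (μ : ℝ) (f : (Fin n → ℝ) → ℝ) (x : Fin n → ℝ) : ℝ≥0∞ :=
  (∫⁻ p in {p : (Fin n → ℝ) × ℝ | 0 < p.2},
      ENNReal.ofReal ((p.2 / (p.2 + ‖x - p.1‖)) ^ (μ * n) *
        (convol f (psit ψ p.2) p.1) ^ 2 / p.2 ^ (n + 1))) ^ (1 / 2 : ℝ)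

/-- `Φ` is a Schwartz function with `χ_{B(0,1)} ≤ Φ ≤ χ_{B(0,2)}`. -/
def IsAdaptedBump {n : ℕ} (Φ : (Fin n → ℝ) → ℝ) : Prop :=
  (∃ Φ' : SchwartzMap (Fin n → ℝ) ℝ, ∀ x, Φ' x = Φ x) ∧
    ∀ x, (Metric.closedBall (0 : Fin n → ℝ) 1).indicator (fun _ => (1 : ℝ)) x ≤ Φ x ∧
      Φ x ≤ (Metric.closedBall (0 : Fin n → ℝ) 2).indicator (fun _ => (1 : ℝ)) x

/-- The smooth square function `S̃_{α,ψ}(f)`. -/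
def SsqSmooth {n : ℕ} (ψ Φ : (Fin n → ℝ) → ℝ) (α : ℝ) (f : (Fin n → ℝ) → ℝ)
    (x : Fin n → ℝ) : ℝ≥0∞ :=
  (∫⁻ p in {p : (Fin n → ℝ) × ℝ | 0 < p.2},
      ENNReal.ofReal (Φ (fun i => (x i - p.1 i) / (p.2 * α)) *
        (convol f (psit ψ p.2) p.1) ^ 2 / p.2 ^ (n + 1))) ^ (1 / 2 : ℝ)

/-- A general dyadic grid: sidelengths are powers of two, any two cubes are nested or
disjoint, and the cubes of a fixed sidelength partition `ℝⁿ`. -/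
def IsDyadicGrid {n : ℕ} (D : Set (RCube n)) : Prop :=
  (∀ Q ∈ D, ∃ k : ℤ, Q.side = (2 : ℝ) ^ k) ∧
  (∀ Q ∈ D, ∀ R ∈ D, Q.toSet ∩ R.toSet = Q.toSet ∨ Q.toSet ∩ R.toSet = R.toSet ∨
      Q.toSet ∩ R.toSet = ∅) ∧
  ∀ k : ℤ, ∀ x : Fin n → ℝ, ∃! Q : RCube n, (Q ∈ D ∧ Q.side = (2 : ℝ) ^ k) ∧ x ∈ Q.toSet

/-- The standard dyadic grid `𝒟`, consisting of the cubes `2^{-k}([0,1)ⁿ + j)`. -/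
def stdGrid (n : ℕ) : Set (RCube n) :=
  {Q | ∃ (k : ℤ) (j : Fin n → ℤ), Q.side = (2 : ℝ) ^ (-k) ∧
      Q.corner = fun i => (2 : ℝ) ^ (-k) * (j i : ℝ)}

/-- The family `𝒟(Q₀)` of dyadic subcubes of a cube `Q₀`. -/
def dyadicSub {n : ℕ} (Q0 : RCube n) : Set (RCube n) :=
  {Q | ∃ (k : ℕ) (j : Fin n → ℕ), (∀ i, j i < 2 ^ k) ∧ Q.side = Q0.side / 2 ^ k ∧
      Q.corner = fun i => Q0.corner i + (j i : ℝ) * (Q0.side / 2 ^ k)}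

/-- A sparse family `{Q_j^k}` of cubes, indexed by the level `k`. -/
def IsSparse {n : ℕ} (S : ℤ → Set (RCube n)) : Prop :=
  (∀ k, (S k).PairwiseDisjoint RCube.toSet) ∧
  (∀ k, (⋃ Q ∈ S (k + 1), Q.toSet) ⊆ ⋃ Q ∈ S k, Q.toSet) ∧
  ∀ k, ∀ Q ∈ S k, volume ((⋃ R ∈ S (k + 1), R.toSet) ∩ Q.toSet) ≤ volume Q.toSet / 2

/-- The sparse square operator `𝒯^S_{2,m} f = (Σ_{j,k} (f_{2^m Q_j^k})² χ_{Q_j^k})^{1/2}`. -/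
def sparseT2 {n : ℕ} (S : ℤ → Set (RCube n)) (m : ℕ) (f : (Fin n → ℝ) → ℝ)
    (x : Fin n → ℝ) : ℝ≥0∞ :=
  (∑' (k : ℤ) (Q : S k), (Q : RCube n).toSet.indicator
      (fun _ => ENNReal.ofReal ((avg f ((Q : RCube n).dilate (2 ^ m))) ^ 2)) x) ^ (1 / 2 : ℝ)

/-- The non-increasing rearrangement `g*(t) = inf {a > 0 : |{|g| > a}| < t}`. -/
def rearr {n : ℕ} (g : (Fin n → ℝ) → ℝ) (t : ℝ) : ℝ :=
  sInf {a : ℝ | 0 < a ∧ volume {x | a < |g x|} < ENNReal.ofReal t}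

/-- The local mean oscillation `ω_λ(f; Q) = inf_c ((f-c)χ_Q)*(λ|Q|)`. -/
def oscil {n : ℕ} (lam : ℝ) (f : (Fin n → ℝ) → ℝ) (Q : RCube n) : ℝ :=
  ⨅ c : ℝ, rearr (Q.toSet.indicator fun x => f x - c) (lam * (volume Q.toSet).toReal)

/-- `m` is a median value of `f` over the cube `Q`. -/
def IsMedian {n : ℕ} (f : (Fin n → ℝ) → ℝ) (Q : RCube n) (m : ℝ) : Prop :=
  volume {x ∈ Q.toSet | m < f x} ≤ volume Q.toSet / 2 ∧
    volume {x ∈ Q.toSet | f x < m} ≤ volume Q.toSet / 2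

/-- The maximal median value of `f` over `Q`. -/
def medianMax {n : ℕ} (f : (Fin n → ℝ) → ℝ) (Q : RCube n) : ℝ :=
  sSup {m | IsMedian f Q m}

/-- The dyadic local sharp maximal function `m^{#,d}_{λ;Q₀} f`. -/
def sharpMax {n : ℕ} (lam : ℝ) (Q0 : RCube n) (f : (Fin n → ℝ) → ℝ) (x : Fin n → ℝ) : ℝ :=
  sSup {r | ∃ Q ∈ dyadicSub Q0, x ∈ Q.toSet ∧ r = oscil lam f Q}

/-- The Hardy–Littlewood maximal operator (over cubes). -/
def maximalFn {n : ℕ} (f : (Fin n → ℝ) → ℝ) (x : Fin n → ℝ) : ℝ≥0∞ :=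
  ⨆ (Q : RCube n) (_ : 0 < Q.side ∧ x ∈ Q.toSet), ENNReal.ofReal (avg (fun y => |f y|) Q)

/-- A Banach function norm on (nonnegative) functions on `ℝⁿ`, in the sense of
Bennett–Sharpley: monotone, subadditive, homogeneous, nondegenerate, with the Fatou
property, finite on indicators of sets of finite measure, and dominating local `L¹` norms. -/
structure FunctionNorm (n : ℕ) where
  ρ : ((Fin n → ℝ) → ℝ≥0∞) → ℝ≥0∞
  mono : ∀ f g, (∀ᵐ x ∂(volume : Measure (Fin n → ℝ)), f x ≤ g x) → ρ f ≤ ρ g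
  add_le : ∀ f g, ρ (fun x => f x + g x) ≤ ρ f + ρ g
  smul : ∀ (c : ℝ≥0∞) (f), ρ (fun x => c * f x) = c * ρ f
  zero_iff : ∀ f, ρ f = 0 ↔ ∀ᵐ x ∂(volume : Measure (Fin n → ℝ)), f x = 0
  fatou : ∀ f : ℕ → (Fin n → ℝ) → ℝ≥0∞, Monotone f →
    (⨆ k, ρ (f k)) = ρ (fun x => ⨆ k, f k x)
  indicator_lt_top : ∀ E : Set (Fin n → ℝ), MeasurableSet E → volume E < ⊤ →
    ρ (E.indicator fun _ => 1) < ⊤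
  setLIntegral_le : ∀ E : Set (Fin n → ℝ), MeasurableSet E → volume E < ⊤ →
    ∃ C : ℝ≥0∞, C < ⊤ ∧ ∀ f, (∫⁻ x in E, f x) ≤ C * ρ f


/-! ### Auxiliary lemmas for `statement10` -/

lemma st10_cube_toSet_eq {n : ℕ} (Q : RCube n) :
    Q.toSet = Set.pi univ (fun i => Set.Ico (Q.corner i) (Q.corner i + Q.side)) := by
  ext x; simp [RCube.toSet, Set.mem_pi]

lemma st10_cube_meas {n : ℕ} (Q : RCube n) : MeasurableSet Q.toSet := by
  rw [st10_cube_toSet_eq]; exact MeasurableSet.univ_pi fun i => measurableSet_Ico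

lemma st10_cube_volume {n : ℕ} (Q : RCube n) (h : 0 ≤ Q.side) :
    volume Q.toSet = ENNReal.ofReal (Q.side ^ n) := by
  rw [st10_cube_toSet_eq, volume_pi_pi]
  simp [Real.volume_Ico, ← ENNReal.ofReal_pow h]

lemma st10_cube_bounded {n : ℕ} (Q : RCube n) :
    Q.toSet ⊆ Set.pi univ (fun i => Set.Icc (Q.corner i) (Q.corner i + Q.side)) := by
  intro x hx i _; exact ⟨(hx i).1, (hx i).2.le⟩

lemma st10_qmp_aux {n : ℕ} (y : Fin n → ℝ) {t : ℝ} (ht : t ≠ 0) :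
    Measure.QuasiMeasurePreserving
      (fun ξ : Fin n → ℝ => (fun i => (y i - ξ i) / t)) volume volume := by
  have hmap : (fun ξ : Fin n → ℝ => (fun i => (y i - ξ i) / t)) =
      (fun v : Fin n → ℝ => t⁻¹ • v) ∘ (fun ξ => y - ξ) := by
    funext ξ; funext i
    simp [div_eq_inv_mul]
  rw [hmap]
  exact (Measure.quasiMeasurePreserving_smul volume (inv_ne_zero ht)).comp
    (Measure.measurePreserving_sub_left volume y).quasiMeasurePreserving

lemma st10_convol_congr {n : ℕ} (g g' ψ ψ' : (Fin n → ℝ) → ℝ) (hg : g =ᵐ[volume] g')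
    (hψ : ψ =ᵐ[volume] ψ') (y : Fin n → ℝ) {t : ℝ} (ht : t ≠ 0) :
    convol g (psit ψ t) y = convol g' (psit ψ' t) y := by
  apply integral_congr_ae
  have h1 : (fun ξ : Fin n → ℝ => ψ (fun i => (y i - ξ i) / t)) =ᵐ[volume]
      (fun ξ => ψ' (fun i => (y i - ξ i) / t)) := (st10_qmp_aux y ht).ae_eq_comp hψ
  filter_upwards [hg, h1] with ξ h2 h3
  have : (fun i => (y - ξ) i / t) = fun i => (y i - ξ i) / t := by funext i; simp
  simp only [psit, this, h2, h3]

lemma st10_psit_smul {n : ℕ} (ψ : (Fin n → ℝ) → ℝ) (t : ℝ) (x : Fin n → ℝ) :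
    psit ψ t x = (t ^ n)⁻¹ * ψ (t⁻¹ • x) := by
  have : (fun i => x i / t) = t⁻¹ • x := by funext i; simp [div_eq_inv_mul]
  rw [psit, this]

lemma st10_psit_integrable {n : ℕ} {ψ : (Fin n → ℝ) → ℝ} (hψ : Integrable ψ) {t : ℝ}
    (ht : 0 < t) : Integrable (psit ψ t) := by
  have h : Integrable (fun x : Fin n → ℝ => ψ (t⁻¹ • x)) :=
    hψ.comp_smul (inv_ne_zero ht.ne')
  have heq : psit ψ t = fun x => (t ^ n)⁻¹ * ψ (t⁻¹ • x) := funext (st10_psit_smul ψ t)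
  rw [heq]
  exact h.const_mul _

lemma st10_psit_norm {n : ℕ} (ψ : (Fin n → ℝ) → ℝ) {t : ℝ}
    (ht : 0 < t) : ∫ x, |psit ψ t x| = ∫ x, |ψ x| := by
  have h1 : ∀ x : Fin n → ℝ, |psit ψ t x| = (t ^ n)⁻¹ * |ψ (t⁻¹ • x)| := by
    intro x
    rw [st10_psit_smul, abs_mul, abs_inv, abs_pow, abs_of_pos ht]
  simp_rw [h1]
  rw [integral_const_mul, Measure.integral_comp_inv_smul_of_nonneg volume
      (fun x => |ψ x|) ht.le,
    Module.finrank_fin_fun, smul_eq_mul, ← mul_assoc, inv_mul_cancel₀ (by positivity), one_mul]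

lemma st10_psit_lintegral {n : ℕ} {ψ : (Fin n → ℝ) → ℝ} (hψ : Integrable ψ) {t : ℝ}
    (ht : 0 < t) : ∫⁻ x, ENNReal.ofReal |psit ψ t x| = ENNReal.ofReal (∫ x, |ψ x|) := by
  rw [← st10_psit_norm ψ ht, ofReal_integral_eq_lintegral_ofReal (st10_psit_integrable hψ ht).abs
    (Filter.Eventually.of_forall fun x => abs_nonneg _)]

section st10core
variable {n : ℕ} {g ψ : (Fin n → ℝ) → ℝ} {C : ℝ}

lemma st10_conv_meas (hgm : StronglyMeasurable g) (hψm : StronglyMeasurable ψ) :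
    StronglyMeasurable (fun p : (Fin n → ℝ) × ℝ => convol g (psit ψ p.2) p.1) := by
  have h1 : StronglyMeasurable
      (fun q : ((Fin n → ℝ) × ℝ) × (Fin n → ℝ) => g q.2 * psit ψ q.1.2 (q.1.1 - q.2)) := by
    apply Measurable.stronglyMeasurable
    apply Measurable.mul
    · exact hgm.measurable.comp measurable_snd
    · apply Measurable.mul
      · exact ((measurable_fst.snd.pow measurable_const)).inv
      · apply hψm.measurable.comp
        apply measurable_pi_lambda
        intro i
        exact (((measurable_pi_apply i).comp measurable_fst.fst).sub
          ((measurable_pi_apply i).comp measurable_snd)).div measurable_fst.snd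
  exact h1.integral_prod_right'

lemma st10_conv_sup (hg : Integrable g) (hψb : ∀ x, |ψ x| ≤ C) (y : Fin n → ℝ) {t : ℝ}
    (ht : 0 < t) :
    |convol g (psit ψ t) y| ≤ (C * (t ^ n)⁻¹) * ∫ ξ, |g ξ| := by
  have hC0 : 0 ≤ C := le_trans (abs_nonneg _) (hψb 0)
  have htn : (0:ℝ) < t ^ n := by positivity
  have hb : ∀ x, |psit ψ t x| ≤ C * (t ^ n)⁻¹ := by
    intro x
    rw [psit, abs_mul, abs_inv, abs_pow, abs_of_pos ht, mul_comm]
    exact mul_le_mul_of_nonneg_right (hψb _) (by positivity)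
  calc |convol g (psit ψ t) y| ≤ ∫ ξ, ‖g ξ * psit ψ t (y - ξ)‖ := by
        rw [← Real.norm_eq_abs]; exact norm_integral_le_integral_norm _
    _ ≤ ∫ ξ, |g ξ| * (C * (t ^ n)⁻¹) := by
        apply integral_mono_of_nonneg (Filter.Eventually.of_forall fun ξ => norm_nonneg _)
          (hg.abs.mul_const _)
        filter_upwards with ξ
        rw [norm_mul]
        exact mul_le_mul_of_nonneg_left (hb _) (abs_nonneg _)
    _ = (C * (t ^ n)⁻¹) * ∫ ξ, |g ξ| := by rw [integral_mul_const, mul_comm]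

lemma st10_conv_L1 (hg : Integrable g) (hgm : StronglyMeasurable g)
    (hψm : StronglyMeasurable ψ) (hψi : Integrable ψ) {t : ℝ} (ht : 0 < t) :
    ∫⁻ y, ENNReal.ofReal |convol g (psit ψ t) y| ≤
      ENNReal.ofReal (∫ ξ, |g ξ|) * ENNReal.ofReal (∫ x, |ψ x|) := by
  have hmeas : Measurable (Function.uncurry fun (y ξ : Fin n → ℝ) =>
      ENNReal.ofReal |g ξ| * ENNReal.ofReal |psit ψ t (y - ξ)|) := by
    show Measurable (fun p : (Fin n → ℝ) × (Fin n → ℝ) =>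
      ENNReal.ofReal |g p.2| * ENNReal.ofReal |psit ψ t (p.1 - p.2)|)
    refine Measurable.mul (f := fun p : (Fin n → ℝ) × (Fin n → ℝ) => ENNReal.ofReal |g p.2|)
      (g := fun p => ENNReal.ofReal |psit ψ t (p.1 - p.2)|) ?_ ?_
    · exact ENNReal.measurable_ofReal.comp (hgm.measurable.abs.comp measurable_snd)
    · apply ENNReal.measurable_ofReal.comp
      apply Measurable.abs
      apply Measurable.mul measurable_const
      exact hψm.measurable.comp (measurable_pi_lambda _ fun i =>
        (((measurable_pi_apply i).comp measurable_fst).sub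
          ((measurable_pi_apply i).comp measurable_snd)).div measurable_const)
  calc ∫⁻ y, ENNReal.ofReal |convol g (psit ψ t) y|
      ≤ ∫⁻ y, ∫⁻ ξ, ENNReal.ofReal |g ξ| * ENNReal.ofReal |psit ψ t (y - ξ)| := by
        apply lintegral_mono; intro y
        dsimp only
        have h1 : (ENNReal.ofReal |convol g (psit ψ t) y|) =
            (‖∫ ξ, g ξ * psit ψ t (y - ξ)‖₊ : ℝ≥0∞) := by
          rw [← Real.norm_eq_abs, ofReal_norm]; rfl
        rw [h1]
        refine le_trans (enorm_integral_le_lintegral_enorm _) (le_of_eq ?_)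
        apply lintegral_congr; intro ξ
        rw [enorm_mul, ← ofReal_norm,
          ← ofReal_norm, Real.norm_eq_abs, Real.norm_eq_abs]
    _ = ∫⁻ ξ, ∫⁻ y, ENNReal.ofReal |g ξ| * ENNReal.ofReal |psit ψ t (y - ξ)| :=
        lintegral_lintegral_swap hmeas.aemeasurable
    _ = ∫⁻ ξ, ENNReal.ofReal |g ξ| * ENNReal.ofReal (∫ x, |ψ x|) := by
        apply lintegral_congr; intro ξ
        rw [lintegral_const_mul' _ _ ENNReal.ofReal_ne_top]
        congr 1
        rw [lintegral_sub_right_eq_self (fun y => ENNReal.ofReal |psit ψ t y|) ξ]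
        exact st10_psit_lintegral hψi ht
    _ = ENNReal.ofReal (∫ ξ, |g ξ|) * ENNReal.ofReal (∫ x, |ψ x|) := by
        rw [lintegral_mul_const' _ _ ENNReal.ofReal_ne_top,
          ofReal_integral_eq_lintegral_ofReal hg.abs
            (Filter.Eventually.of_forall fun x => abs_nonneg _)]

end st10core

lemma st10_arith (n : ℕ) (C P A α ℓ X : ℝ) (hC : 0 ≤ C) (hP : 0 ≤ P) (hA : 0 ≤ A)
    (hα : 1 ≤ α) (hℓ : 0 < ℓ) (hX : 0 < X) :
    ℓ/α * (C * (A*(4*X*ℓ)^n)^2 * P * (((X/4)*ℓ/α)^(2*n+1))⁻¹) ≤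
      (C+1)*(P+1)*2^(8*n+2) * α^(2*n) * X⁻¹ * A^2 := by
  have hα0 : 0 < α := lt_of_lt_of_le one_pos hα
  have key : ℓ/α * (C * (A*(4*X*ℓ)^n)^2 * P * (((X/4)*ℓ/α)^(2*n+1))⁻¹) =
      (C*P)*2^(8*n+2) * α^(2*n) * X⁻¹ * A^2 := by
    have h2 : (2:ℝ)^(8*n+2) = 4^(2*n) * 4^(2*n+1) := by
      rw [← pow_add]
      have h4 : (4:ℝ) = 2^2 := by norm_num
      rw [h4, ← pow_mul]
      ring_nf
    rw [h2]
    simp only [div_eq_mul_inv, mul_pow, inv_pow, mul_inv, inv_inv]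
    field_simp
    ring
  rw [key]
  have hCP : C*P ≤ (C+1)*(P+1) := by nlinarith
  gcongr
/-- The estimate for the term `J₁`:
`(ℓ_Q/α) ∫∫ |(fχ_{2^{k+2}Q}) * ψ_t(y)|² dy dt/t^{n+2} ≤ c α^{2n} 2^{-k} (f-average)²`. -/
theorem statement10 {n : ℕ} (hn : 1 ≤ n) (ψ : (Fin n → ℝ) → ℝ) (hψi : Integrable ψ)
    (C : ℝ) (hψb : ∀ x, |ψ x| ≤ C) :
    ∃ c : ℝ, 0 < c ∧ ∀ α : ℝ, 1 ≤ α → ∀ Q : RCube n, 0 < Q.side → ∀ k : ℕ, 1 ≤ k →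
      ∀ f : (Fin n → ℝ) → ℝ, LocallyIntegrable f volume →
        ENNReal.ofReal (Q.side / α) *
          (∫⁻ p in {p : (Fin n → ℝ) × ℝ | p.1 ∈ (Q.dilate (2 ^ (k + 1))).toSet ∧
              (2 : ℝ) ^ ((k : ℤ) - 2) * Q.side / α < p.2 ∧ p.2 < 2 ^ (k + 1) * Q.side},
            ENNReal.ofReal ((convol ((Q.dilate (2 ^ (k + 2))).toSet.indicator f)
              (psit ψ p.2) p.1) ^ 2 / p.2 ^ (n + 2))) ≤
        ENNReal.ofReal (c * α ^ (2 * n) * (2 : ℝ) ^ (-(k : ℝ)) *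
          (avg (fun y => |f y|) (Q.dilate (2 ^ (k + 2)))) ^ 2) := by
  classical
  have hC0 : 0 ≤ C := le_trans (abs_nonneg _) (hψb 0)
  -- a strongly measurable representative of ψ, bounded by C everywhere
  set ψ0 : (Fin n → ℝ) → ℝ := hψi.1.mk ψ with hψ0def
  set ψ' : (Fin n → ℝ) → ℝ := ({x | |ψ0 x| ≤ C}).indicator ψ0 with hψ'def
  have hψ0sm : StronglyMeasurable ψ0 := hψi.1.stronglyMeasurable_mk
  have hψ'sm : StronglyMeasurable ψ' :=
    hψ0sm.indicator (measurableSet_le hψ0sm.measurable.abs measurable_const)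
  have hψψ' : ψ =ᵐ[volume] ψ' := by
    filter_upwards [hψi.1.ae_eq_mk] with x hx
    have hx' : ψ0 x = ψ x := hx.symm
    have hmem : x ∈ {x | |ψ0 x| ≤ C} := by
      simp only [Set.mem_setOf_eq, hx']
      exact hψb x
    rw [hψ'def, Set.indicator_of_mem hmem, hx']
  have hψ'b : ∀ x, |ψ' x| ≤ C := by
    intro x
    rw [hψ'def]
    by_cases hx : x ∈ {x | |ψ0 x| ≤ C}
    · rw [Set.indicator_of_mem hx]; exact hx
    · rw [Set.indicator_of_notMem hx]; simpa using hC0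
  have hψ'i : Integrable ψ' := hψi.congr hψψ'
  set P : ℝ := ∫ x, |ψ' x| with hPdef
  have hP0 : 0 ≤ P := integral_nonneg fun x => abs_nonneg _
  refine ⟨(C + 1) * (P + 1) * 2 ^ (8 * n + 2), by positivity, ?_⟩
  intro α hα Q hQ k hk f hf
  have hα0 : 0 < α := lt_of_lt_of_le one_pos hα
  set R2 := Q.dilate (2 ^ (k + 1)) with hR2def
  set R3 := Q.dilate (2 ^ (k + 2)) with hR3def
  have hs3 : (0:ℝ) < 2 ^ (k + 2) * Q.side := by positivity
  -- integrability of f on R3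
  have hfR3 : IntegrableOn f R3.toSet volume := by
    have hcomp : IsCompact (Set.pi univ fun i => Set.Icc (R3.corner i) (R3.corner i + R3.side)) :=
      isCompact_univ_pi fun i => isCompact_Icc
    exact (hf.integrableOn_isCompact hcomp).mono_set (st10_cube_bounded R3)
  set g := R3.toSet.indicator f with hgdef
  have hgi : Integrable g := hfR3.integrable_indicator (st10_cube_meas R3)
  set g' : (Fin n → ℝ) → ℝ := hgi.1.mk g with hg'def
  have hg'sm : StronglyMeasurable g' := hgi.1.stronglyMeasurable_mk
  have hgg' : g =ᵐ[volume] g' := hgi.1.ae_eq_mk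
  have hg'i : Integrable g' := hgi.congr hgg'
  set I : ℝ := ∫ ξ, |g' ξ| with hIdef
  have hI0 : 0 ≤ I := integral_nonneg fun x => abs_nonneg _
  set A : ℝ := avg (fun y => |f y|) R3 with hAdef
  have hvol : volume R3.toSet = ENNReal.ofReal ((2 ^ (k + 2) * Q.side) ^ n) :=
    st10_cube_volume R3 hs3.le
  have hIR3 : I = ∫ ξ in R3.toSet, |f ξ| := by
    rw [hIdef]
    rw [integral_congr_ae (g := fun ξ => |g ξ|) (by filter_upwards [hgg'] with x hx; rw [hx])]
    have habs : (fun ξ => |g ξ|) = R3.toSet.indicator fun y => |f y| := by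
      funext ξ
      rw [hgdef]
      by_cases hξ : ξ ∈ R3.toSet
      · rw [Set.indicator_of_mem hξ, Set.indicator_of_mem hξ]
      · rw [Set.indicator_of_notMem hξ, Set.indicator_of_notMem hξ, abs_zero]
    rw [habs, integral_indicator (st10_cube_meas R3)]
  have hA0 : 0 ≤ A := by
    rw [hAdef, avg]
    exact mul_nonneg (inv_nonneg.2 ENNReal.toReal_nonneg)
      (integral_nonneg fun x => abs_nonneg _)
  have hIA : I = A * (2 ^ (k + 2) * Q.side) ^ n := by
    rw [hIR3, hAdef, avg, hvol, ENNReal.toReal_ofReal (by positivity)]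
    rw [mul_comm ((((2:ℝ) ^ (k + 2) * Q.side) ^ n)⁻¹) _, mul_assoc,
      inv_mul_cancel₀ (by positivity), mul_one]
  set t0 : ℝ := 2 ^ ((k : ℤ) - 2) * Q.side / α with ht0def
  have ht0 : 0 < t0 := by
    rw [ht0def]
    have : (0:ℝ) < 2 ^ ((k : ℤ) - 2) := zpow_pos (by norm_num) _
    positivity
  set t1 : ℝ := 2 ^ (k + 1) * Q.side with ht1def
  -- the region as a product set
  have hregion : {p : (Fin n → ℝ) × ℝ | p.1 ∈ R2.toSet ∧ t0 < p.2 ∧ p.2 < t1} =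
      R2.toSet ×ˢ Ioo t0 t1 := by
    ext ⟨y, t⟩
    simp [Set.mem_prod, Set.mem_Ioo, and_assoc]
  have hGmeas : Measurable (fun p : (Fin n → ℝ) × ℝ =>
      ENNReal.ofReal ((convol g' (psit ψ' p.2) p.1) ^ 2 / p.2 ^ (n + 2))) := by
    apply ENNReal.measurable_ofReal.comp
    exact (((st10_conv_meas hg'sm hψ'sm).measurable).pow_const 2).div
      (measurable_snd.pow_const (n + 2))
  -- inner bound for fixed t
  have key : ∀ t, t ∈ Ioo t0 t1 →
      (∫⁻ y, ENNReal.ofReal ((convol g' (psit ψ' t) y) ^ 2 / t ^ (n + 2))) ≤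
      ENNReal.ofReal (C * I ^ 2 * P / t ^ (2 * n + 2)) := by
    intro t htt
    have ht : 0 < t := lt_trans ht0 htt.1
    have htn : (0:ℝ) < t ^ n := by positivity
    have htn2 : (0:ℝ) < t ^ (n + 2) := by positivity
    calc (∫⁻ y, ENNReal.ofReal ((convol g' (psit ψ' t) y) ^ 2 / t ^ (n + 2)))
        ≤ ∫⁻ y, ENNReal.ofReal (C * (t ^ n)⁻¹ * I / t ^ (n + 2)) *
            ENNReal.ofReal |convol g' (psit ψ' t) y| := by
          apply lintegral_mono; intro y
          dsimp only
          rw [← ENNReal.ofReal_mul (by positivity)]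
          apply ENNReal.ofReal_le_ofReal
          have h2 : (convol g' (psit ψ' t) y) ^ 2 ≤
              (C * (t ^ n)⁻¹ * I) * |convol g' (psit ψ' t) y| := by
            have := st10_conv_sup hg'i hψ'b y ht
            calc (convol g' (psit ψ' t) y) ^ 2
                = |convol g' (psit ψ' t) y| * |convol g' (psit ψ' t) y| := by
                  rw [pow_two]; exact (abs_mul_abs_self _).symm
              _ ≤ (C * (t ^ n)⁻¹ * I) * |convol g' (psit ψ' t) y| := by
                  apply mul_le_mul_of_nonneg_right _ (abs_nonneg _)
                  rw [hIdef]
                  exact this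
          calc (convol g' (psit ψ' t) y) ^ 2 / t ^ (n + 2)
              ≤ ((C * (t ^ n)⁻¹ * I) * |convol g' (psit ψ' t) y|) / t ^ (n + 2) := by
                gcongr
            _ = C * (t ^ n)⁻¹ * I / t ^ (n + 2) * |convol g' (psit ψ' t) y| := by ring
      _ = ENNReal.ofReal (C * (t ^ n)⁻¹ * I / t ^ (n + 2)) *
            ∫⁻ y, ENNReal.ofReal |convol g' (psit ψ' t) y| :=
          lintegral_const_mul' _ _ ENNReal.ofReal_ne_top
      _ ≤ ENNReal.ofReal (C * (t ^ n)⁻¹ * I / t ^ (n + 2)) *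
            (ENNReal.ofReal I * ENNReal.ofReal P) := by
          apply mul_le_mul_right
          rw [hIdef, hPdef]
          exact st10_conv_L1 hg'i hg'sm hψ'sm hψ'i ht
      _ = ENNReal.ofReal (C * I ^ 2 * P / t ^ (2 * n + 2)) := by
          rw [← ENNReal.ofReal_mul (by positivity), ← ENNReal.ofReal_mul (by positivity)]
          congr 1
          field_simp
          ring
  -- the main computation
  set r : ℝ := -((2 * n : ℝ) + 2) with hrdef
  have hr : r < -1 := by
    rw [hrdef]
    have : (0:ℝ) ≤ (2 * n : ℝ) := by positivity
    linarith
  set E : ℝ := ∫ t in Ioi t0, t ^ r with hEdef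
  have hE0 : 0 ≤ E := by
    rw [hEdef]
    apply integral_nonneg_of_ae
    filter_upwards [ae_restrict_mem measurableSet_Ioi] with t ht
    exact Real.rpow_nonneg (le_of_lt (lt_trans ht0 ht)) r
  have hEeval : E ≤ (t0 ^ (2 * n + 1))⁻¹ := by
    rw [hEdef, integral_Ioi_rpow_of_lt hr ht0]
    have hr1 : r + 1 = -((2 * n : ℝ) + 1) := by rw [hrdef]; ring
    rw [hr1]
    have h1 : t0 ^ (-((2 * n : ℝ) + 1)) = (t0 ^ (2 * n + 1 : ℕ))⁻¹ := by
      rw [Real.rpow_neg ht0.le, ← Real.rpow_natCast t0 (2 * n + 1)]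
      push_cast
      ring_nf
    rw [← h1]
    rw [neg_div, div_neg, neg_neg]
    apply div_le_self (Real.rpow_nonneg ht0.le _)
    have : (0:ℝ) ≤ (2 * n : ℝ) := by positivity
    linarith
  calc ENNReal.ofReal (Q.side / α) *
        ∫⁻ p in {p : (Fin n → ℝ) × ℝ | p.1 ∈ R2.toSet ∧ t0 < p.2 ∧ p.2 < t1},
          ENNReal.ofReal ((convol g (psit ψ p.2) p.1) ^ 2 / p.2 ^ (n + 2))
      = ENNReal.ofReal (Q.side / α) * ∫⁻ p in R2.toSet ×ˢ Ioo t0 t1,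
          ENNReal.ofReal ((convol g' (psit ψ' p.2) p.1) ^ 2 / p.2 ^ (n + 2)) := by
        rw [hregion]
        congr 1
        apply setLIntegral_congr_fun ((st10_cube_meas R2).prod measurableSet_Ioo)
        rintro ⟨y, t⟩ hp
        have ht : 0 < t := lt_trans ht0 hp.2.1
        dsimp only
        rw [st10_convol_congr g g' ψ ψ' hgg' hψψ' y ht.ne']
    _ ≤ ENNReal.ofReal (Q.side / α) * ∫⁻ p in (univ : Set (Fin n → ℝ)) ×ˢ Ioo t0 t1,
          ENNReal.ofReal ((convol g' (psit ψ' p.2) p.1) ^ 2 / p.2 ^ (n + 2)) := by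
        apply mul_le_mul_right
        exact lintegral_mono_set (Set.prod_mono (subset_univ _) subset_rfl)
    _ = ENNReal.ofReal (Q.side / α) * ∫⁻ t in Ioo t0 t1,
          ∫⁻ y, ENNReal.ofReal ((convol g' (psit ψ' t) y) ^ 2 / t ^ (n + 2)) := by
        congr 1
        rw [Measure.volume_eq_prod, ← Measure.prod_restrict, Measure.restrict_univ]
        exact lintegral_prod_symm _ hGmeas.aemeasurable
    _ ≤ ENNReal.ofReal (Q.side / α) * ∫⁻ t in Ioo t0 t1,
          ENNReal.ofReal (C * I ^ 2 * P / t ^ (2 * n + 2)) := by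
        apply mul_le_mul_right
        apply lintegral_mono_ae
        filter_upwards [ae_restrict_mem measurableSet_Ioo] with t htt
        exact key t htt
    _ ≤ ENNReal.ofReal (Q.side / α) *
          (ENNReal.ofReal (C * I ^ 2 * P) * ENNReal.ofReal E) := by
        apply mul_le_mul_right
        have hcong : ∫⁻ t in Ioo t0 t1, ENNReal.ofReal (C * I ^ 2 * P / t ^ (2 * n + 2)) =
            ∫⁻ t in Ioo t0 t1, ENNReal.ofReal (C * I ^ 2 * P) * ENNReal.ofReal (t ^ r) := by
          apply setLIntegral_congr_fun measurableSet_Ioo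
          intro t htt
          have ht : 0 < t := lt_trans ht0 htt.1
          dsimp only
          rw [← ENNReal.ofReal_mul (by positivity)]
          congr 1
          rw [hrdef, Real.rpow_neg ht.le, div_eq_mul_inv]
          congr 2
          rw [← Real.rpow_natCast t (2 * n + 2)]
          push_cast
          ring_nf
        rw [hcong, lintegral_const_mul' _ _ ENNReal.ofReal_ne_top]
        apply mul_le_mul_right
        calc (∫⁻ t in Ioo t0 t1, ENNReal.ofReal (t ^ r))
            ≤ ∫⁻ t in Ioi t0, ENNReal.ofReal (t ^ r) :=
              lintegral_mono_set Ioo_subset_Ioi_self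
          _ = ENNReal.ofReal E := by
              rw [hEdef, ofReal_integral_eq_lintegral_ofReal
                (integrableOn_Ioi_rpow_of_lt hr ht0) ?_]
              filter_upwards [ae_restrict_mem measurableSet_Ioi] with t ht
              exact Real.rpow_nonneg (le_of_lt (lt_trans ht0 ht)) r
    _ ≤ ENNReal.ofReal ((C + 1) * (P + 1) * 2 ^ (8 * n + 2) * α ^ (2 * n) *
          (2 : ℝ) ^ (-(k : ℝ)) * A ^ 2) := by
        rw [← ENNReal.ofReal_mul (by positivity), ← ENNReal.ofReal_mul (by positivity)]
        apply ENNReal.ofReal_le_ofReal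
        set X : ℝ := (2:ℝ) ^ k with hXdef
        have hX : (0:ℝ) < X := by positivity
        have h2k : (2:ℝ) ^ (-(k : ℝ)) = X⁻¹ := by
          rw [Real.rpow_neg (by norm_num), Real.rpow_natCast]
        have h4X : (2:ℝ) ^ (k + 2) = 4 * X := by rw [pow_add, hXdef]; ring
        have ht0X : t0 = X / 4 * Q.side / α := by
          rw [ht0def]
          congr 2
          rw [zpow_sub₀ (by norm_num : (2:ℝ) ≠ 0), zpow_natCast]
          norm_num [hXdef]
        have step1 : Q.side / α * (C * I ^ 2 * P * E) ≤
            Q.side / α * (C * (A * (4 * X * Q.side) ^ n) ^ 2 * P *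
              (((X / 4) * Q.side / α) ^ (2 * n + 1))⁻¹) := by
          rw [hIA, h4X, ← ht0X]
          apply mul_le_mul_of_nonneg_left _ (by positivity)
          exact mul_le_mul_of_nonneg_left hEeval (by positivity)
        calc Q.side / α * (C * I ^ 2 * P * E)
            ≤ Q.side / α * (C * (A * (4 * X * Q.side) ^ n) ^ 2 * P *
              (((X / 4) * Q.side / α) ^ (2 * n + 1))⁻¹) := step1
          _ ≤ (C + 1) * (P + 1) * 2 ^ (8 * n + 2) * α ^ (2 * n) * X⁻¹ * A ^ 2 :=
              st10_arith n C P A α Q.side X hC0 hP0 hA0 hα hQ hX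
          _ = (C + 1) * (P + 1) * 2 ^ (8 * n + 2) * α ^ (2 * n) *
              (2 : ℝ) ^ (-(k : ℝ)) * A ^ 2 := by rw [h2k]
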